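/- If y : ℕ → ℝ is a sequence such that y(m)²/m → 0 as m → ∞ (and eventually y(m) < m), then (1 - y(m)/m)^m / e^{-y(m)} → 1 as m → ∞. -/

import Mathlib

open Real Filter

theorem pow_div_exp_tendsto_one (y : ℕ → ℝ)
    (h : Tendsto (fun m : ℕ => (y m) ^ 2 / (m : ℝ)) atTop (nhds 0))
    (h' : ∀ᶠ m : ℕ in atTop, y m < (m : ℝ)) :
    Tendsto (fun m : ℕ => (1 - y m / (m : ℝ)) ^ (m : ℝ) / Real.exp (-(y m)))
      atTop (nhds 1) := by
  -- x m = y m / m tends to 0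
  have hx2 : Tendsto (fun m : ℕ => (y m / m) ^ 2) atTop (nhds 0) := by
    have := h.mul tendsto_one_div_atTop_nhds_zero_nat
    simp only [mul_zero] at this
    refine this.congr fun m => ?_
    simp only [div_eq_mul_inv, one_mul]
    ring
  have hx : Tendsto (fun m : ℕ => y m / m) atTop (nhds 0) := by
    have habs : Tendsto (fun m : ℕ => |y m / m|) atTop (nhds 0) := by
      have := (Real.continuous_sqrt.tendsto 0).comp hx2
      simpa [Function.comp_def, Real.sqrt_sq_eq_abs] using this
    exact tendsto_zero_iff_abs_tendsto_zero _ |>.2 habs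
  -- g m = m * log (1 - y m / m) + y m tends to 0
  set g : ℕ → ℝ := fun m => (m : ℝ) * Real.log (1 - y m / m) + y m with hg
  have hsmall : ∀ᶠ m : ℕ in atTop, |y m / m| ≤ 1 / 2 := by
    have habs : Tendsto (fun m : ℕ => |y m / m|) atTop (nhds 0) := by
      simpa using hx.abs
    exact habs.eventually (eventually_le_nhds (by norm_num : (0:ℝ) < 1/2))
  have hg0 : Tendsto g atTop (nhds 0) := by
    apply squeeze_zero_norm' (a := fun m : ℕ => 2 * ((y m) ^ 2 / m))
    · filter_upwards [hsmall, eventually_ge_atTop 1] with m hm hm1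
      have hmpos : (0:ℝ) < m := by exact_mod_cast hm1
      set x := y m / m with hxdef
      have hxlt : |x| < 1 := lt_of_le_of_lt hm (by norm_num)
      have hlog := Real.abs_log_sub_add_sum_range_le hxlt 1
      norm_num at hlog
      have hy : y m = (m : ℝ) * x := by rw [hxdef]; field_simp
      have : ‖g m‖ = (m : ℝ) * |x + Real.log (1 - x)| := by
        rw [hg]
        simp only [Real.norm_eq_abs, hy]
        rw [← mul_add, abs_mul, abs_of_pos hmpos, add_comm,
          mul_div_cancel_left₀ x (ne_of_gt hmpos)]
      rw [this]
      have h1 : (1:ℝ) - |x| ≥ 1/2 := by linarith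
      have hxx : x ^ 2 / (1 - |x|) ≤ 2 * x ^ 2 := by
        rw [div_le_iff₀ (by linarith)]
        nlinarith [sq_nonneg x, abs_nonneg x]
      have : (m : ℝ) * |x + Real.log (1 - x)| ≤ (m : ℝ) * (2 * x ^ 2) :=
        mul_le_mul_of_nonneg_left (hlog.trans hxx) hmpos.le
      refine this.trans (le_of_eq ?_)
      rw [hy]
      field_simp
    · simpa using tendsto_const_nhds.mul h
  -- conclude
  have hexp : Tendsto (fun m : ℕ => Real.exp (g m)) atTop (nhds 1) := by
    simpa [Function.comp_def] using (Real.continuous_exp.tendsto 0).comp hg0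
  refine hexp.congr' ?_
  filter_upwards [h', hsmall, eventually_ge_atTop 1] with m hm hs hm1
  have hmpos : (0:ℝ) < m := by exact_mod_cast hm1
  have hbpos : (0:ℝ) < 1 - y m / m := by
    rw [sub_pos, div_lt_one hmpos]; exact hm
  rw [Real.rpow_def_of_pos hbpos, ← Real.exp_sub]
  congr 1
  simp only [hg]
  ring
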